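/- If T → T' is an arrow in the pre-projective tilting quiver of Q (with Q satisfying condition (b)), writing T = ⊕τ^{-r_i}P(i) and T' = ⊕τ^{-r'_i}P(i), then there is exactly one vertex i with r'_i = r_i + 1 and r'_j = r_j for all j ≠ i. -/
import Mathlib


/-! Combinatorics of quivers: walks in the double quiver, the function `l_Q`,
paths, acyclicity, condition (b), unique sources, and the set `L(Q)`.
A quiver on a vertex type `V` is encoded by its family of arrow types
`H : V → V → Type`. -/

/-- Walks in the double quiver `Q̃` of the quiver `Q` encoded by `H`:
a step may traverse an arrow forwards (`fwd`) or backwards (`bwd`). -/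
inductive DWalk {V : Type} (H : V → V → Type) : V → V → Type where
  | nil : (a : V) → DWalk H a a
  | fwd : {a b c : V} → DWalk H a b → H b c → DWalk H a c
  | bwd : {a b c : V} → DWalk H a b → H c b → DWalk H a c

/-- `c⁺(w)`: the number of forward (original) arrows used by a walk in `Q̃`. -/
def DWalk.cplus {V : Type} {H : V → V → Type} : {a b : V} → DWalk H a b → ℕ
  | _, _, .nil _ => 0
  | _, _, .fwd w _ => DWalk.cplus w + 1
  | _, _, .bwd w _ => DWalk.cplus w

/-- `l_Q(i,j)`: the minimal number of forward arrows over all walks from `i`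
to `j` in the double quiver `Q̃`.  (In particular `l_Q(i,i) = 0`.) -/
noncomputable def ell {V : Type} (H : V → V → Type) (i j : V) : ℕ :=
  sInf {m | ∃ w : DWalk H i j, DWalk.cplus w = m}

/-- Directed paths in the quiver `Q` itself. -/
inductive QPath {V : Type} (H : V → V → Type) : V → V → Type where
  | nil : (a : V) → QPath H a a
  | cons : {a b c : V} → QPath H a b → H b c → QPath H a c

def QPath.length {V : Type} {H : V → V → Type} : {a b : V} → QPath H a b → ℕ
  | _, _, .nil _ => 0
  | _, _, .cons p _ => QPath.length p + 1

/-- `Q` has no loops and no (nontrivial, directed) cycles. -/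
def QuiverAcyclic {V : Type} (H : V → V → Type) : Prop :=
  ∀ (a : V) (p : QPath H a a), QPath.length p = 0

/-- `Q` is connected (any two vertices are joined by a walk in `Q̃`). -/
def QuiverConnected {V : Type} (H : V → V → Type) : Prop :=
  ∀ a b : V, Nonempty (DWalk H a b)

/-- Condition (b): for every vertex `x`, `#s(x) + #t(x) > 1`. -/
def CondB {V : Type} (H : V → V → Type) [Fintype V] [∀ a b, Fintype (H a b)] : Prop :=
  ∀ x : V, 1 < ∑ y : V, (Fintype.card (H x y) + Fintype.card (H y x))

/-- `s` is the unique source (vertex with no incoming arrows) of `Q`. -/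
def UniqueSource {V : Type} (H : V → V → Type) (s : V) : Prop :=
  (∀ y : V, IsEmpty (H y s)) ∧ ∀ t : V, (∀ y : V, IsEmpty (H y t)) → t = s

/-- The set `L(Q) = {(r_i) ∈ ℤ_{≥0}^{Q₀} ∣ r_j ≤ r_i + l_Q(i,j) for all i,j}`. -/
def LSet {V : Type} (H : V → V → Type) : Set (V → ℕ) :=
  {r | ∀ i j : V, r j ≤ r i + ell H i j}


/-! ### Auxiliary lemmas -/

/-- Concatenation of walks in the double quiver. -/
def DWalk.comp {V : Type} {H : V → V → Type} :
    {a b c : V} → DWalk H a b → DWalk H b c → DWalk H a c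
  | _, _, _, w, .nil _ => w
  | _, _, _, w, .fwd w' e => .fwd (w.comp w') e
  | _, _, _, w, .bwd w' e => .bwd (w.comp w') e

lemma DWalk.cplus_comp {V : Type} {H : V → V → Type} {a b c : V}
    (w : DWalk H a b) (w' : DWalk H b c) :
    (w.comp w').cplus = w.cplus + w'.cplus := by
  induction w' with
  | nil => simp [DWalk.comp, DWalk.cplus]
  | fwd w'' e ih => simp only [DWalk.comp, DWalk.cplus, ih]; omega
  | bwd w'' e ih => simp only [DWalk.comp, DWalk.cplus, ih]

lemma ell_le_cplus {V : Type} (H : V → V → Type) {i j : V} (w : DWalk H i j) :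
    ell H i j ≤ w.cplus :=
  Nat.sInf_le ⟨w, rfl⟩

lemma exists_dwalk_cplus_eq {V : Type} (H : V → V → Type)
    (hconn : QuiverConnected H) (i j : V) :
    ∃ w : DWalk H i j, w.cplus = ell H i j := by
  have hne : {m | ∃ w : DWalk H i j, DWalk.cplus w = m}.Nonempty := by
    obtain ⟨w⟩ := hconn i j
    exact ⟨w.cplus, w, rfl⟩
  exact Nat.sInf_mem hne

lemma ell_triangle {V : Type} (H : V → V → Type) (hconn : QuiverConnected H)
    (i j k : V) : ell H i k ≤ ell H i j + ell H j k := by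
  obtain ⟨w1, hw1⟩ := exists_dwalk_cplus_eq H hconn i j
  obtain ⟨w2, hw2⟩ := exists_dwalk_cplus_eq H hconn j k
  have := ell_le_cplus H (w1.comp w2)
  rwa [DWalk.cplus_comp, hw1, hw2] at this

/-- Concatenation of paths. -/
def QPath.comp {V : Type} {H : V → V → Type} :
    {a b c : V} → QPath H a b → QPath H b c → QPath H a c
  | _, _, _, p, .nil _ => p
  | _, _, _, p, .cons q e => .cons (p.comp q) e

lemma QPath.length_comp {V : Type} {H : V → V → Type} {a b c : V}
    (p : QPath H a b) (q : QPath H b c) :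
    (p.comp q).length = p.length + q.length := by
  induction q with
  | nil => simp [QPath.comp, QPath.length]
  | cons q' e ih => simp only [QPath.comp, QPath.length, ih]; omega

/-- Prepending an arrow to a path. -/
def QPath.frontCons {V : Type} {H : V → V → Type} :
    {a b c : V} → H a b → QPath H b c → QPath H a c
  | _, _, _, e, .nil _ => .cons (.nil _) e
  | _, _, _, e, .cons p f => .cons (QPath.frontCons e p) f

lemma qpath_eq_of_length_zero {V : Type} {H : V → V → Type} {a b : V}
    (p : QPath H a b) (h : p.length = 0) : a = b := by
  cases p with
  | nil => rfl
  | cons p' e => simp [QPath.length] at h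

/-- A walk with no forward arrows yields a directed path in the opposite
direction. -/
lemma qpath_of_cplus_zero {V : Type} {H : V → V → Type} :
    ∀ {a b : V} (w : DWalk H a b), w.cplus = 0 → Nonempty (QPath H b a) := by
  intro a b w
  induction w with
  | nil => exact fun _ => ⟨.nil _⟩
  | fwd w' e ih => intro h; simp [DWalk.cplus] at h
  | bwd w' e ih =>
    intro h
    obtain ⟨p⟩ := ih (by simpa [DWalk.cplus] using h)
    exact ⟨QPath.frontCons e p⟩

lemma ell_add_ell_pos {V : Type} (H : V → V → Type)
    (hacyc : QuiverAcyclic H) (hconn : QuiverConnected H) {i j : V}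
    (hij : i ≠ j) : 0 < ell H i j + ell H j i := by
  by_contra h
  push_neg at h
  have h1 : ell H i j = 0 := by omega
  have h2 : ell H j i = 0 := by omega
  obtain ⟨w1, hw1⟩ := exists_dwalk_cplus_eq H hconn i j
  obtain ⟨w2, hw2⟩ := exists_dwalk_cplus_eq H hconn j i
  obtain ⟨p⟩ := qpath_of_cplus_zero w1 (by rw [hw1, h1])
  obtain ⟨q⟩ := qpath_of_cplus_zero w2 (by rw [hw2, h2])
  -- p : QPath H j i, q : QPath H i j
  have hcyc := hacyc j (p.comp q)
  rw [QPath.length_comp] at hcyc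
  have hp0 : p.length = 0 := by omega
  exact hij (qpath_eq_of_length_zero p hp0).symm

/-- Let `Q` be a finite connected acyclic quiver in which every
vertex meets at least two arrows.  If `T → T'` is an arrow in the pre-projective
tilting quiver, i.e. (in combinatorial form) if `(r_i)` covers `(r'_i)` in the
poset `(L(Q), ≥^op)` (coordinatewise `≤` reversed), then there is exactly one
vertex `i` with `r'_i = r_i + 1` and `r'_j = r_j` for all `j ≠ i`. -/
theorem tilting_arrow_single_mutation {V : Type} [Fintype V]
    (H : V → V → Type) [∀ a b, Fintype (H a b)]
    (hacyc : QuiverAcyclic H) (hconn : QuiverConnected H) (hb : CondB H)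
    (r r' : V → ℕ) (hr : r ∈ LSet H) (hr' : r' ∈ LSet H)
    (hle : ∀ i, r i ≤ r' i) (hne : r ≠ r')
    (hcov : ∀ t ∈ LSet H, (∀ i, r i ≤ t i) → (∀ i, t i ≤ r' i) → t = r ∨ t = r') :
    ∃! i : V, r' i = r i + 1 ∧ ∀ j, j ≠ i → r' j = r j := by
  classical
  -- Step 1: every coordinate grows by at most 1.
  have hstep1 : ∀ j, r' j ≤ r j + 1 := by
    set t : V → ℕ := fun j => max (r j) (r' j - 1) with ht
    have htL : t ∈ LSet H := by
      intro i j
      have h1 := hr i j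
      have h2 := hr' i j
      have hA : r j ≤ max (r i) (r' i - 1) + ell H i j :=
        le_trans h1 (Nat.add_le_add_right (le_max_left _ _) _)
      have hB : r' j - 1 ≤ max (r i) (r' i - 1) + ell H i j := by
        have := le_max_right (r i) (r' i - 1); omega
      exact max_le hA hB
    have hrt : ∀ i, r i ≤ t i := fun i => le_max_left _ _
    have htr' : ∀ i, t i ≤ r' i := fun i => max_le (hle i) (by omega)
    rcases hcov t htL hrt htr' with h | h
    · intro j
      have hj := congrFun h j
      have := max_choice (r j) (r' j - 1)
      simp only [ht] at hj
      omega
    · exfalso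
      apply hne
      funext j
      have hj := congrFun h j
      have := max_choice (r j) (r' j - 1)
      have := hle j
      simp only [ht] at hj
      omega
  -- Step 2: at most one coordinate grows.
  have hD1 : ∀ i k : V, r i < r' i → r k < r' k → i = k := by
    by_contra hcon
    push_neg at hcon
    obtain ⟨i, k, hiD, hkD, hik⟩ := hcon
    -- the "tight" relation
    set R : V → V → Prop := fun m j =>
      m ≠ j ∧ r m < r' m ∧ r j < r' j ∧ r j = r m + ell H m j with hR
    have hRtrans : ∀ a b c, R a b → R b c → R a c := by
      intro a b c ⟨hab, haD, hbD, habe⟩ ⟨hbc, _, hcD, hbce⟩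
      have htri := ell_triangle H hconn a b c
      have hac := hr a c
      have hpos := ell_add_ell_pos H hacyc hconn hab
      have hba := ell_triangle H hconn b a b
      refine ⟨?_, haD, hcD, by omega⟩
      intro hEq
      subst hEq
      have hpos2 := ell_add_ell_pos H hacyc hconn hab
      omega
    have hRirr : ∀ a, ¬ R a a := fun a h => h.1 rfl
    have hwf : WellFounded (fun a b => R b a) := by
      haveI : IsTrans V (fun a b => R b a) := ⟨fun a b c h1 h2 => hRtrans c b a h2 h1⟩
      haveI : IsIrrefl V (fun a b => R b a) := ⟨hRirr⟩
      exact Finite.wellFounded_of_trans_of_irrefl _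
    obtain ⟨j₀, hj₀D, hj₀min⟩ :=
      hwf.has_min {x | r x < r' x} ⟨i, hiD⟩
    -- pick an element of D different from j₀
    obtain ⟨w, hwD, hwj₀⟩ : ∃ w, r w < r' w ∧ w ≠ j₀ := by
      by_cases h : i = j₀
      · exact ⟨k, hkD, fun hk => hik (by rw [h, hk])⟩
      · exact ⟨i, hiD, h⟩
    set t : V → ℕ := fun j => if r j < r' j ∧ j ≠ j₀ then r j + 1 else r j with ht
    have htL : t ∈ LSet H := by
      intro m j
      simp only [ht]
      by_cases hj : r j < r' j ∧ j ≠ j₀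
      · rw [if_pos hj]
        by_cases hm : r m < r' m ∧ m ≠ j₀
        · rw [if_pos hm]
          have := hr m j
          omega
        · rw [if_neg hm]
          by_cases hmj : m = j
          · exact absurd (hmj ▸ hj) hm
          push_neg at hm
          by_cases hmD : r m < r' m
          · have hmj₀ : m = j₀ := hm hmD
            subst hmj₀
            have hnR : ¬ R m j := hj₀min j hj.1
            have hrj := hr m j
            simp only [hR] at hnR
            push_neg at hnR
            have := hnR hmj hmD hj.1
            omega
          · -- m is not in D
            have hrm : r m = r' m := by have := hle m; omega
            have := hr' m j
            have := hstep1 j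
            omega
      · rw [if_neg hj]
        have h1 : r m ≤ if r m < r' m ∧ m ≠ j₀ then r m + 1 else r m := by
          split_ifs <;> omega
        have := hr m j
        omega
    have hrt : ∀ i, r i ≤ t i := by
      intro i; simp only [ht]; split_ifs <;> omega
    have htr' : ∀ i, t i ≤ r' i := by
      intro i; simp only [ht]
      split_ifs with h
      · omega
      · exact hle i
    rcases hcov t htL hrt htr' with h | h
    · have := congrFun h w
      simp only [ht, if_pos (And.intro hwD hwj₀)] at this
      omega
    · have hj₀lt : r j₀ < r' j₀ := hj₀D
      have := congrFun h j₀
      have hj₀' : ¬ (r j₀ < r' j₀ ∧ j₀ ≠ j₀) := by simp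
      simp only [ht, if_neg hj₀'] at this
      omega
  -- Conclusion
  obtain ⟨i₀, hi₀⟩ : ∃ i, r i ≠ r' i := by
    by_contra h
    push_neg at h
    exact hne (funext h)
  have hi₀D : r i₀ < r' i₀ := lt_of_le_of_ne (hle i₀) hi₀
  refine ⟨i₀, ⟨?_, ?_⟩, ?_⟩
  · have := hstep1 i₀; omega
  · intro j hj
    have : ¬ r j < r' j := fun hjD => hj (hD1 j i₀ hjD hi₀D)
    have := hle j
    omega
  · rintro y ⟨hy1, -⟩
    exact hD1 y i₀ (by omega) hi₀D
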